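/- The number of S-Motzkin paths of length 3n that contain no two horizontal steps at the same height with all intermediate steps at or above that height (i.e., 'atomic' S-Motzkin paths, which arise as greedy h-insertions into Dyck paths) equals the Catalan number C_n = (1/(n+1)) * C(2n, n). -/

import Mathlib

inductive Step : Type
  | u : Step
  | d : Step
  | h : Step
deriving DecidableEq, Repr

def stepVal : Step → ℤ
  | Step.u => 1
  | Step.d => -1
  | Step.h => 0

/-- Sum of step values (final height) of a word. -/
def hsum (w : List Step) : ℤ := (w.map stepVal).sum

/-- All prefixes have nonnegative height. -/
def NonnegPrefixes (w : List Step) : Prop := ∀ p : List Step, p <+: w → 0 ≤ hsum p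

/-- A Motzkin path: nonnegative prefix heights and total height 0. -/
def IsMotzkin (w : List Step) : Prop := NonnegPrefixes w ∧ hsum w = 0

/-- The word (hu)^n. -/
def huWord (n : ℕ) : List Step := (List.replicate n [Step.h, Step.u]).flatten

/-- An S-Motzkin path with n up, n down, n horizontal steps:
a Motzkin path whose subword of non-down steps is (hu)^n. -/
def IsSMotzkin (n : ℕ) (w : List Step) : Prop :=
  IsMotzkin w ∧ w.count Step.u = n ∧ w.count Step.d = n ∧ w.count Step.h = n ∧
    w.filter (fun s => s ≠ Step.d) = huWord n

/-- A nonempty word over {h, u}. -/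
def HUBlock (A : List Step) : Prop := A ≠ [] ∧ ∀ s ∈ A, s = Step.h ∨ s = Step.u

/-- Glue blocks A_i with runs of d_i down steps: A_0 d^{d_1} A_1 d^{d_2} ... -/
def joinAM (As : List (List Step)) (ds : List ℕ) : List Step :=
  (List.zipWith (fun A k => A ++ List.replicate k Step.d) As ds).flatten

/-- w decomposes as A_0 D_1 A_1 D_2 ... A_{t-1} D_t with A_i nonempty over {h,u}
and D_i nonempty runs of down steps. -/
def AMDecomp (w : List Step) (As : List (List Step)) (ds : List ℕ) : Prop :=
  As.length = ds.length ∧ (∀ A ∈ As, HUBlock A) ∧ (∀ k ∈ ds, 0 < k) ∧ w = joinAM As ds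

/-- An Asinowski–Mansour path with n up, n down, n horizontal steps. -/
def IsAM (n : ℕ) (w : List Step) : Prop :=
  IsMotzkin w ∧ w.count Step.u = n ∧ w.count Step.d = n ∧ w.count Step.h = n ∧
    ∃ As ds, AMDecomp w As ds

/-- A Dyck path with n up and n down steps, encoded over the alphabet Step. -/
def IsDyck (n : ℕ) (w : List Step) : Prop :=
  (∀ s ∈ w, s = Step.u ∨ s = Step.d) ∧ w.count Step.u = n ∧ w.count Step.d = n ∧
    NonnegPrefixes w

/-- Height of the path at the start of step i. -/
def heightAt (w : List Step) (i : ℕ) : ℤ := hsum (w.take i)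

/-- Two horizontal steps at positions i < j, at the same height, with all steps
strictly between them at or above that height. -/
def Matched (w : List Step) (i j : ℕ) : Prop :=
  i < j ∧ w[i]? = some Step.h ∧ w[j]? = some Step.h ∧
    heightAt w i = heightAt w j ∧ ∀ k, i < k → k < j → heightAt w i ≤ heightAt w k

/-- Positions of the horizontal steps of w, from left to right. -/
def hPositions (w : List Step) : List ℕ := List.findIdxs (fun s => s = Step.h) w

/-- Lexicographic (weak) order on lists of naturals. -/
def LexLe (l l' : List ℕ) : Prop := l = l' ∨ List.Lex (· < ·) l l'

/-- w is an S-Motzkin word obtained by inserting horizontal steps into D. -/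
def ValidIns (D w : List Step) : Prop :=
  (∃ m, IsSMotzkin m w) ∧ w.filter (fun s => s ≠ Step.h) = D

/-- w is the greedy h-insertion into D: each h leftmost, i.e. the list of positions
of the h's is lexicographically minimal among all valid insertions. -/
def GreedyFor (D w : List Step) : Prop :=
  ValidIns D w ∧ ∀ w', ValidIns D w' → LexLe (hPositions w) (hPositions w')

/-- An S-Motzkin path is atomic if it has no matched pair of horizontal steps. -/
def Atomic (w : List Step) : Prop := ¬ ∃ i j, Matched w i j

namespace ASAux

lemma hsum_nil : hsum [] = 0 := rfl
lemma hsum_cons (s : Step) (t : List Step) : hsum (s :: t) = stepVal s + hsum t := by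
  simp [hsum]
lemma hsum_append (a b : List Step) : hsum (a ++ b) = hsum a + hsum b := by
  simp [hsum]

lemma heightAt_zero (w : List Step) : heightAt w 0 = 0 := rfl

lemma heightAt_succ {w : List Step} {i : ℕ} {s : Step} (h : w[i]? = some s) :
    heightAt w (i + 1) = heightAt w i + stepVal s := by
  unfold heightAt
  rw [List.take_succ, h, hsum_append]
  simp [hsum_cons, hsum_nil]

lemma heightAt_nonneg {w : List Step} (hN : NonnegPrefixes w) (i : ℕ) :
    0 ≤ heightAt w i := hN _ (List.take_prefix _ _)

lemma huWord_succ (n : ℕ) : huWord (n + 1) = Step.h :: Step.u :: huWord n := by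
  simp [huWord, List.replicate_succ]

/-- The word u h u h ... u with k u's (k-1 h's). -/
def gword : ℕ → List Step
  | 0 => []
  | 1 => [Step.u]
  | (k + 2) => Step.u :: Step.h :: gword (k + 1)

lemma huWord_eq_gword (n : ℕ) : huWord (n + 1) = Step.h :: gword (n + 1) := by
  induction n with
  | zero => simp [huWord, gword]
  | succ m ih =>
      rw [huWord_succ, ih]
      rfl

lemma huWord_shape (m : ℕ) : huWord m = [] ∨ ∃ t, huWord m = Step.h :: t := by
  cases m with
  | zero => left; rfl
  | succ k => right; exact ⟨_, huWord_succ k⟩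

lemma no_uu : ∀ (n : ℕ) (a b : List Step), a ++ Step.u :: Step.u :: b ≠ huWord n := by
  intro n
  induction n with
  | zero => intro a b hab; simp [huWord] at hab
  | succ m ih =>
      intro a b hab
      rw [huWord_succ] at hab
      match a, hab with
      | [], hab => simp at hab
      | [x], hab =>
          rw [List.cons_append, List.nil_append] at hab
          injection hab with h1 h2
          injection h2 with h3 h4
          rcases huWord_shape m with hm | ⟨t, hm⟩ <;> rw [hm] at h4 <;> simp at h4
      | x :: y :: a', hab =>
          rw [List.cons_append, List.cons_append] at hab
          injection hab with h1 h2
          injection h2 with h3 h4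
          exact ih a' b h4


lemma not_uu_adj {w : List Step} {n : ℕ} {i : ℕ}
    (hf : w.filter (fun s => s ≠ Step.d) = huWord n)
    (hi : w[i]? = some Step.u) (hj : w[i + 1]? = some Step.u) : False := by
  obtain ⟨hlen1, hg1⟩ := List.getElem?_eq_some_iff.mp hi
  obtain ⟨hlen2, hg2⟩ := List.getElem?_eq_some_iff.mp hj
  have hdrop : w.drop i = Step.u :: Step.u :: w.drop (i + 2) := by
    rw [List.drop_eq_getElem_cons hlen1, hg1, List.drop_eq_getElem_cons hlen2, hg2]
  have hw : w = w.take i ++ Step.u :: Step.u :: w.drop (i + 2) := by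
    rw [← hdrop, List.take_append_drop]
  apply no_uu n ((w.take i).filter (fun s => s ≠ Step.d)) ((w.drop (i + 2)).filter (fun s => s ≠ Step.d))
  rw [← hf]
  conv_rhs => rw [hw]
  rw [List.filter_append]
  simp

lemma mem_of_count {w : List Step} (s : Step) (h : ∀ x ∈ w, x = Step.u ∨ x = Step.d) :
    w.length = w.count Step.u + w.count Step.d := by
  induction w with
  | nil => rfl
  | cons a t ih =>
      have ha := h a (by simp)
      have ih' := ih (fun x hx => h x (by simp [hx]))
      rcases ha with rfl | rfl <;> simp [List.count_cons, ih'] <;> omega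

lemma hsum_ud {w : List Step} (h : ∀ x ∈ w, x = Step.u ∨ x = Step.d) :
    hsum w = (w.count Step.u : ℤ) - (w.count Step.d : ℤ) := by
  induction w with
  | nil => simp [hsum_nil]
  | cons a t ih =>
      have ha := h a (by simp)
      have ih' := ih (fun x hx => h x (by simp [hx]))
      rcases ha with rfl | rfl <;>
        simp [hsum_cons, List.count_cons, ih', stepVal] <;> push_cast <;> ring

lemma hsum_filter_h (w : List Step) :
    hsum (w.filter (fun s => s ≠ Step.h)) = hsum w := by
  induction w with
  | nil => rfl
  | cons a t ih =>
      simp only [ne_eq, decide_not] at ih ⊢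
      cases a <;> simp [List.filter_cons, hsum_cons, ih, stepVal]

lemma prefix_filter {p : List Step} {q : Step → Bool} {w : List Step}
    (hp : p <+: w.filter q) : ∃ p', p' <+: w ∧ p = p'.filter q := by
  induction w generalizing p with
  | nil =>
      rw [List.filter_nil, List.prefix_nil] at hp
      exact ⟨[], List.nil_prefix, by simp [hp]⟩
  | cons a t ih =>
      by_cases hqa : q a
      · rw [List.filter_cons, if_pos hqa] at hp
        rcases List.prefix_cons_iff.mp hp with rfl | ⟨p₂, rfl, hp₂⟩
        · exact ⟨[], List.nil_prefix, rfl⟩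
        · obtain ⟨p', hp', rfl⟩ := ih hp₂
          exact ⟨a :: p', List.cons_prefix_cons.mpr ⟨rfl, hp'⟩, by
            rw [List.filter_cons, if_pos hqa]⟩
      · rw [List.filter_cons, if_neg hqa] at hp
        obtain ⟨p', hp', rfl⟩ := ih hp
        exact ⟨a :: p', List.cons_prefix_cons.mpr ⟨rfl, hp'⟩, by
          rw [List.filter_cons, if_neg hqa]⟩


/-- Insert an h after each u that is followed by another u later. -/
def ins : List Step → List Step
  | [] => []
  | Step.u :: t => if Step.u ∈ t then Step.u :: Step.h :: ins t else Step.u :: ins t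
  | Step.d :: t => Step.d :: ins t
  | Step.h :: t => Step.h :: ins t

/-- The canonical (greedy) h-insertion. -/
def canon (D : List Step) : List Step := Step.h :: ins D

lemma ins_no_u : ∀ {l : List Step}, Step.u ∉ l → ins l = l
  | [], _ => rfl
  | Step.u :: t, h => absurd (by simp) h
  | Step.d :: t, h => by
      rw [ins, ins_no_u (fun hu => h (by simp [hu]))]
  | Step.h :: t, h => by
      rw [ins, ins_no_u (fun hu => h (by simp [hu]))]

lemma count_ins (s : Step) (hs : s ≠ Step.h) : ∀ l : List Step, (ins l).count s = l.count s
  | [] => rfl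
  | Step.u :: t => by
      by_cases hu : Step.u ∈ t <;>
        simp [ins, hu, List.count_cons, count_ins s hs t, hs, Ne.symm hs]
  | Step.d :: t => by simp [ins, List.count_cons, count_ins s hs t]
  | Step.h :: t => by simp [ins, List.count_cons, count_ins s hs t]

lemma count_h_ins : ∀ {l : List Step}, (∀ x ∈ l, x = Step.u ∨ x = Step.d) → Step.u ∈ l →
    (ins l).count Step.h + 1 = l.count Step.u
  | [], _, hu => absurd hu (by simp)
  | Step.u :: t, hl, _ => by
      by_cases hu : Step.u ∈ t
      · have ih := count_h_ins (fun x hx => hl x (by simp [hx])) hu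
        simp [ins, hu, List.count_cons] at ih ⊢
        omega
      · have ht : Step.h ∉ t := fun hh => by
          rcases hl Step.h (by simp [hh]) with h | h <;> simp at h
        rw [ins, if_neg hu, ins_no_u hu]
        simp [List.count_cons, List.count_eq_zero.mpr ht, List.count_eq_zero.mpr hu]
  | Step.d :: t, hl, hu => by
      have hu' : Step.u ∈ t := by
        rcases List.mem_cons.mp hu with h | h
        · exact absurd h (by simp)
        · exact h
      have ih := count_h_ins (l := t) (fun x hx => hl x (by simp [hx])) hu'
      simp [ins, List.count_cons] at ih ⊢
      omega
  | Step.h :: t, hl, hu => by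
      rcases hl Step.h (by simp) with h | h <;> simp at h

lemma hsum_ins : ∀ l : List Step, hsum (ins l) = hsum l
  | [] => rfl
  | Step.u :: t => by
      by_cases hu : Step.u ∈ t <;>
        simp [ins, hu, hsum_cons, hsum_ins t, stepVal]
  | Step.d :: t => by simp [ins, hsum_cons, hsum_ins t]
  | Step.h :: t => by simp [ins, hsum_cons, hsum_ins t]

lemma filter_h_ins : ∀ l : List Step,
    (ins l).filter (fun s => s ≠ Step.h) = l.filter (fun s => s ≠ Step.h)
  | [] => rfl
  | Step.u :: t => by
      have ih := filter_h_ins t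
      simp only [ne_eq, decide_not] at ih ⊢
      by_cases hu : Step.u ∈ t <;>
        simp [ins, hu, List.filter_cons, ih]
  | Step.d :: t => by
      have ih := filter_h_ins t
      simp only [ne_eq, decide_not] at ih ⊢
      simp [ins, List.filter_cons, ih]
  | Step.h :: t => by
      have ih := filter_h_ins t
      simp only [ne_eq, decide_not] at ih ⊢
      simp [ins, List.filter_cons, ih]

lemma filter_d_ins : ∀ {l : List Step}, (∀ x ∈ l, x = Step.u ∨ x = Step.d) →
    (ins l).filter (fun s => s ≠ Step.d) = gword (l.count Step.u)
  | [], _ => rfl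
  | Step.u :: t, hl => by
      have ih := filter_d_ins (l := t) (fun x hx => hl x (by simp [hx]))
      by_cases hu : Step.u ∈ t
      · obtain ⟨m, hm⟩ : ∃ m, t.count Step.u = m + 1 := by
          have := List.count_pos_iff.mpr hu
          exact ⟨t.count Step.u - 1, by omega⟩
        rw [ins, if_pos hu]
        simp only [ne_eq, decide_not] at ih
        simp [List.filter_cons, ih, List.count_cons, hm, gword]
      · have ht : ∀ x ∈ t, x = Step.d := fun x hx => by
          rcases hl x (by simp [hx]) with rfl | rfl
          · exact absurd hx hu
          · rfl
        rw [ins, if_neg hu, ins_no_u hu]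
        have h1 : t.filter (fun s => s ≠ Step.d) = [] :=
          List.filter_eq_nil_iff.mpr (fun a ha => by simp [ht a ha])
        have h2 : t.count Step.u = 0 := List.count_eq_zero.mpr hu
        simp only [ne_eq, decide_not] at h1
        simp [List.filter_cons, h1, List.count_cons, h2, gword]
  | Step.d :: t, hl => by
      have ih := filter_d_ins (l := t) (fun x hx => hl x (by simp [hx]))
      simp only [ne_eq, decide_not] at ih
      simp [ins, List.filter_cons, ih, List.count_cons]
  | Step.h :: t, hl => by
      rcases hl Step.h (by simp) with h | h <;> simp at h

lemma ins_prefix : ∀ {l : List Step} {p : List Step}, p <+: ins l →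
    ∃ q, q <+: l ∧ hsum p = hsum q
  | [], p, hp => by
      have hp' : p = [] := by simpa [ins, List.prefix_nil] using hp
      exact ⟨[], List.nil_prefix, by rw [hp']⟩
  | Step.u :: t, p, hp => by
      by_cases hu : Step.u ∈ t
      · rw [ins, if_pos hu] at hp
        rcases List.prefix_cons_iff.mp hp with rfl | ⟨p₂, rfl, hp₂⟩
        · exact ⟨[], List.nil_prefix, rfl⟩
        rcases List.prefix_cons_iff.mp hp₂ with rfl | ⟨p₃, rfl, hp₃⟩
        · exact ⟨[Step.u], ⟨t, rfl⟩, by simp [hsum_cons, hsum_nil]⟩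
        obtain ⟨q, hq, hq2⟩ := ins_prefix hp₃
        exact ⟨Step.u :: q, List.cons_prefix_cons.mpr ⟨rfl, hq⟩, by
          simp [hsum_cons, hq2, stepVal]⟩
      · rw [ins, if_neg hu] at hp
        rcases List.prefix_cons_iff.mp hp with rfl | ⟨p₂, rfl, hp₂⟩
        · exact ⟨[], List.nil_prefix, rfl⟩
        obtain ⟨q, hq, hq2⟩ := ins_prefix hp₂
        exact ⟨Step.u :: q, List.cons_prefix_cons.mpr ⟨rfl, hq⟩, by
          simp [hsum_cons, hq2]⟩
  | Step.d :: t, p, hp => by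
      rw [ins] at hp
      rcases List.prefix_cons_iff.mp hp with rfl | ⟨p₂, rfl, hp₂⟩
      · exact ⟨[], List.nil_prefix, rfl⟩
      obtain ⟨q, hq, hq2⟩ := ins_prefix hp₂
      exact ⟨Step.d :: q, List.cons_prefix_cons.mpr ⟨rfl, hq⟩, by
        simp [hsum_cons, hq2]⟩
  | Step.h :: t, p, hp => by
      rw [ins] at hp
      rcases List.prefix_cons_iff.mp hp with rfl | ⟨p₂, rfl, hp₂⟩
      · exact ⟨[], List.nil_prefix, rfl⟩
      obtain ⟨q, hq, hq2⟩ := ins_prefix hp₂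
      exact ⟨Step.h :: q, List.cons_prefix_cons.mpr ⟨rfl, hq⟩, by
        simp [hsum_cons, hq2]⟩

lemma ins_h_pred : ∀ {l : List Step}, (∀ x ∈ l, x ≠ Step.h) → ∀ i, (ins l)[i]? = some Step.h →
    ∃ j, i = j + 1 ∧ (ins l)[j]? = some Step.u
  | [], _, i, hi => by simp [ins] at hi
  | Step.u :: t, hl, i, hi => by
      have hl' : ∀ x ∈ t, x ≠ Step.h := fun x hx => hl x (by simp [hx])
      by_cases hu : Step.u ∈ t
      · rw [ins, if_pos hu] at hi ⊢
        match i, hi with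
        | 0, hi => simp at hi
        | 1, hi => exact ⟨0, rfl, by simp⟩
        | (k + 2), hi =>
            obtain ⟨j, rfl, hj⟩ := ins_h_pred hl' k (by simpa using hi)
            exact ⟨j + 2, rfl, by simpa using hj⟩
      · rw [ins, if_neg hu] at hi ⊢
        match i, hi with
        | 0, hi => simp at hi
        | (k + 1), hi =>
            obtain ⟨j, rfl, hj⟩ := ins_h_pred hl' k (by simpa using hi)
            exact ⟨j + 1, rfl, by simpa using hj⟩
  | Step.d :: t, hl, i, hi => by
      have hl' : ∀ x ∈ t, x ≠ Step.h := fun x hx => hl x (by simp [hx])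
      rw [ins] at hi ⊢
      match i, hi with
      | 0, hi => simp at hi
      | (k + 1), hi =>
          obtain ⟨j, rfl, hj⟩ := ins_h_pred hl' k (by simpa using hi)
          exact ⟨j + 1, rfl, by simpa using hj⟩
  | Step.h :: t, hl, i, hi => absurd rfl (hl Step.h (by simp))


lemma canon_h_pred {D : List Step} (hD : ∀ x ∈ D, x = Step.u ∨ x = Step.d) :
    ∀ i, (canon D)[i]? = some Step.h →
      i = 0 ∨ ∃ j, i = j + 1 ∧ (canon D)[j]? = some Step.u := by
  intro i hi
  match i, hi with
  | 0, _ => exact Or.inl rfl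
  | (k + 1), hi =>
      right
      have hD' : ∀ x ∈ D, x ≠ Step.h := fun x hx => by
        rcases hD x hx with rfl | rfl <;> simp
      obtain ⟨j, rfl, hj⟩ := ins_h_pred hD' k (by simpa [canon] using hi)
      exact ⟨j + 1, rfl, by simpa [canon] using hj⟩

lemma atomic_of_pred {w : List Step} (hN : NonnegPrefixes w)
    (hp : ∀ i, w[i]? = some Step.h → i = 0 ∨ ∃ j, i = j + 1 ∧ w[j]? = some Step.u) :
    Atomic w := by
  rintro ⟨i, j, hij, hi, hj, he, hb⟩
  rcases hp j hj with rfl | ⟨m, rfl, hm⟩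
  · omega
  have hhj : heightAt w (m + 1) = heightAt w m + 1 := by
    rw [heightAt_succ hm]; rfl
  rcases hp i hi with rfl | ⟨k, rfl, hk⟩
  · rw [heightAt_zero] at he
    have := heightAt_nonneg hN m
    omega
  · have hmi : m ≠ k + 1 := by
      rintro rfl
      rw [hi] at hm
      simp at hm
    have hgt : k + 1 < m := by omega
    have := hb m hgt (by omega)
    omega

lemma atomic_canon {D : List Step} (hD : ∀ x ∈ D, x = Step.u ∨ x = Step.d)
    (hN : NonnegPrefixes (canon D)) : Atomic (canon D) :=
  atomic_of_pred hN (canon_h_pred hD)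

lemma nonnegPrefixes_canon {D : List Step} (hN : NonnegPrefixes D) :
    NonnegPrefixes (canon D) := by
  intro p hp
  rcases List.prefix_cons_iff.mp hp with rfl | ⟨p₂, rfl, hp₂⟩
  · simp [hsum_nil]
  · obtain ⟨q, hq, hq2⟩ := ins_prefix hp₂
    rw [hsum_cons]
    have := hN q hq
    have : hsum p₂ = hsum q := hq2
    simp [stepVal]
    omega

lemma isSMotzkin_canon {n : ℕ} {D : List Step} (hD : IsDyck n D) (hn : 1 ≤ n) :
    IsSMotzkin n (canon D) := by
  obtain ⟨hud, hcu, hcd, hN⟩ := hD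
  have huD : Step.u ∈ D := List.count_pos_iff.mp (by omega)
  refine ⟨⟨nonnegPrefixes_canon hN, ?_⟩, ?_, ?_, ?_, ?_⟩
  · rw [canon, hsum_cons, hsum_ins, hsum_ud hud, hcu, hcd]
    simp [stepVal]
  · rw [canon, List.count_cons, count_ins Step.u (by simp) D, hcu]
    simp
  · rw [canon, List.count_cons, count_ins Step.d (by simp) D, hcd]
    simp
  · have := count_h_ins hud huD
    rw [canon, List.count_cons]
    simp only [beq_self_eq_true, if_true]
    omega
  · obtain ⟨m, rfl⟩ : ∃ m, n = m + 1 := ⟨n - 1, by omega⟩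
    rw [canon, huWord_eq_gword]
    have hfd := filter_d_ins hud
    rw [hcu] at hfd
    simp only [ne_eq, decide_not] at hfd
    simp [List.filter_cons, hfd]

lemma filter_canon {D : List Step} (hD : ∀ x ∈ D, x = Step.u ∨ x = Step.d) :
    (canon D).filter (fun s => s ≠ Step.h) = D := by
  have h1 := filter_h_ins D
  have h2 : D.filter (fun s => s ≠ Step.h) = D :=
    List.filter_eq_self.mpr (fun a ha => by rcases hD a ha with rfl | rfl <;> simp)
  rw [canon, List.filter_cons]
  simp only [ne_eq, decide_not] at h1 h2 ⊢
  simp [h1, h2]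

lemma isDyck_filter {n : ℕ} {w : List Step} (hw : IsSMotzkin n w) :
    IsDyck n (w.filter (fun s => s ≠ Step.h)) := by
  obtain ⟨⟨hN, _⟩, hcu, hcd, hch, _⟩ := hw
  refine ⟨?_, ?_, ?_, ?_⟩
  · intro s hs
    rw [List.mem_filter] at hs
    cases s
    · exact Or.inl rfl
    · exact Or.inr rfl
    · simp at hs
  · rw [List.count_filter (by simp)]; exact hcu
  · rw [List.count_filter (by simp)]; exact hcd
  · intro p hp
    obtain ⟨p', hp', rfl⟩ := prefix_filter hp
    rw [hsum_filter_h]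
    exact hN p' hp'


lemma head_not_u {w : List Step} {n : ℕ}
    (hf : w.filter (fun s => s ≠ Step.d) = huWord n) : w[0]? ≠ some Step.u := by
  intro h0
  cases w with
  | nil => simp at h0
  | cons a t =>
      obtain rfl : a = Step.u := by simpa using h0
      rw [List.filter_cons] at hf
      norm_num at hf
      rcases huWord_shape n with hm | ⟨x, hm⟩ <;> rw [hm] at hf <;> simp at hf

lemma descend {w : List Step} (hN : NonnegPrefixes w) {i m : ℕ}
    (hi : w[i]? = some Step.h) (hm : heightAt w m = heightAt w i + 1) (hmi : m < i)
    (hb : ∀ k, m < k → k < i → heightAt w i ≤ heightAt w k)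
    (key : ∀ j₂, j₂ < m → w[j₂]? = some Step.u → heightAt w j₂ = heightAt w i →
      (∀ k, j₂ < k → k < i → heightAt w i ≤ heightAt w k) → ∃ a b, Matched w a b) :
    ∃ a b, Matched w a b := by
  classical
  have ht0 : 0 ≤ heightAt w i := heightAt_nonneg hN i
  set t := heightAt w i with htdef
  set P : ℕ → Prop := fun k => heightAt w k ≤ t with hPdef
  have hP0 : P 0 := by simp [hPdef, heightAt_zero, ht0]
  set j₂ := Nat.findGreatest P m with hj₂def
  have hspec : P j₂ := Nat.findGreatest_spec (Nat.zero_le m) hP0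
  have hle : j₂ ≤ m := Nat.findGreatest_le m
  have hnem : j₂ ≠ m := by
    intro h
    rw [h] at hspec
    simp only [hPdef] at hspec
    omega
  have hlt : j₂ < m := lt_of_le_of_ne hle hnem
  have hbig : ∀ k, j₂ < k → k ≤ m → t < heightAt w k := by
    intro k h1 h2
    have := Nat.findGreatest_is_greatest (P := P) h1 h2
    simp only [hPdef] at this
    omega
  have hnext : t < heightAt w (j₂ + 1) := hbig _ (by omega) (by omega)
  have hilen : i < w.length := (List.getElem?_eq_some_iff.mp hi).1
  have hj₂len : j₂ < w.length := by omega
  have hsome : w[j₂]? = some w[j₂] := List.getElem?_eq_getElem hj₂len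
  have hstep := heightAt_succ hsome
  have hspec' : heightAt w j₂ ≤ t := hspec
  have hu2 : w[j₂] = Step.u := by
    cases h : w[j₂] <;> rw [h] at hstep <;> simp [stepVal] at hstep <;> omega
  rw [hu2] at hstep hsome
  simp [stepVal] at hstep
  have hh2 : heightAt w j₂ = t := by omega
  refine key j₂ hlt hsome hh2 ?_
  intro k h1 h2
  by_cases hkm : k ≤ m
  · exact le_of_lt (hbig k h1 hkm)
  · exact hb k (by omega) h2

lemma exists_matched {w : List Step} {n : ℕ} (hN : NonnegPrefixes w)
    (hf : w.filter (fun s => s ≠ Step.d) = huWord n) :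
    ∀ j i, w[j]? = some Step.u → w[i]? = some Step.h → j < i →
      heightAt w j = heightAt w i →
      (∀ k, j < k → k < i → heightAt w i ≤ heightAt w k) → ∃ a b, Matched w a b := by
  intro j
  induction j using Nat.strong_induction_on with
  | _ j IH =>
    intro i hju hi hji he hb
    match j, hju, hji, he, hb with
    | 0, hju, hji, he, hb => exact absurd hju (head_not_u hf)
    | (m + 1), hju, hji, he, hb =>
      have hilen : i < w.length := (List.getElem?_eq_some_iff.mp hi).1
      have hmlen : m < w.length := by omega
      have hsome : w[m]? = some w[m] := List.getElem?_eq_getElem hmlen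
      have hstep := heightAt_succ hsome
      cases hwm : w[m] with
      | u =>
          rw [hwm] at hsome
          exact (not_uu_adj hf hsome hju).elim
      | h =>
          rw [hwm] at hsome hstep
          simp [stepVal] at hstep
          refine ⟨m, i, by omega, hsome, hi, by omega, ?_⟩
          intro k h1 h2
          rcases eq_or_lt_of_le (show m + 1 ≤ k by omega) with rfl | hlt
          · omega
          · have := hb k hlt h2
            omega
      | d =>
          rw [hwm] at hstep
          simp [stepVal] at hstep
          refine descend hN (m := m) hi (by omega) (by omega) ?_ ?_
          · intro k h1 h2
            rcases eq_or_lt_of_le (show m + 1 ≤ k by omega) with rfl | hlt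
            · omega
            · exact hb k hlt h2
          · intro j₂ hj₂ hu2 hh2 hbb
            exact IH j₂ (by omega) i hu2 hi (by omega) hh2 hbb

lemma pred_of_atomic {w : List Step} {n : ℕ} (hN : NonnegPrefixes w)
    (hf : w.filter (fun s => s ≠ Step.d) = huWord n) (ha : Atomic w) :
    ∀ i, w[i + 1]? = some Step.h → w[i]? = some Step.u := by
  intro i hi
  have hilen : i + 1 < w.length := (List.getElem?_eq_some_iff.mp hi).1
  have hsome : w[i]? = some w[i] := List.getElem?_eq_getElem (by omega)
  have hstep := heightAt_succ hsome
  cases hwi : w[i] with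
  | u => rw [hwi] at hsome; exact hsome
  | h =>
      exfalso
      apply ha
      rw [hwi] at hsome hstep
      simp [stepVal] at hstep
      exact ⟨i, i + 1, by omega, hsome, hi, by omega, fun k h1 h2 => by omega⟩
  | d =>
      exfalso
      apply ha
      rw [hwi] at hstep
      simp [stepVal] at hstep
      refine descend hN hi (m := i) (by omega) (by omega) (fun k h1 h2 => by omega) ?_
      intro j₂ hj₂ hu2 hh2 hbb
      exact exists_matched hN hf j₂ (i + 1) hu2 hi (by omega) hh2 hbb


lemma gword_mem_u (m : ℕ) : Step.u ∈ gword (m + 1) := by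
  cases m <;> simp [gword]

lemma head_h_of : ∀ (t : List Step) (l : List Step),
    t.filter (fun s => s ≠ Step.d) = Step.h :: l →
    (∀ i, t[i]? = some Step.h → i = 0 ∨ ∃ j, i = j + 1 ∧ t[j]? = some Step.u) →
    ∃ t', t = Step.h :: t'
  | [], l, hf, _ => by simp at hf
  | Step.h :: t₂, l, hf, _ => ⟨t₂, rfl⟩
  | Step.u :: t₂, l, hf, _ => by simp [List.filter_cons] at hf
  | Step.d :: t₂, l, hf, hp => by
      exfalso
      have hf' : t₂.filter (fun s => s ≠ Step.d) = Step.h :: l := by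
        simpa [List.filter_cons] using hf
      have hp' : ∀ i, t₂[i]? = some Step.h →
          i = 0 ∨ ∃ j, i = j + 1 ∧ t₂[j]? = some Step.u := by
        intro i hi
        obtain ⟨j, hj, hju⟩ := (hp (i + 1) (by simpa using hi)).resolve_left (by omega)
        rw [show j = i by omega] at hju
        cases i with
        | zero => simp at hju
        | succ i' => exact Or.inr ⟨i', rfl, by simpa using hju⟩
      obtain ⟨t₂', rfl⟩ := head_h_of t₂ l hf' hp'
      obtain ⟨j, hj, hju⟩ := (hp 1 (by simp)).resolve_left (by omega)
      rw [show j = 0 by omega] at hju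
      simp at hju

lemma ins_reconstruct_aux : ∀ (N : ℕ) (w : List Step) (k : ℕ), w.length ≤ N →
    w.filter (fun s => s ≠ Step.d) = gword k →
    (∀ i, w[i]? = some Step.h → ∃ j, i = j + 1 ∧ w[j]? = some Step.u) →
    ins (w.filter (fun s => s ≠ Step.h)) = w := by
  intro N
  induction N with
  | zero =>
      intro w k hlen _ _
      have hw : w = [] := List.length_eq_zero_iff.mp (by omega)
      subst hw
      rfl
  | succ N ih =>
      intro w k hlen hf hp
      match w with
      | [] => rfl
      | Step.h :: t =>
          obtain ⟨j, hj, _⟩ := hp 0 (by simp)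
          omega
      | Step.d :: t =>
          have hf' : t.filter (fun s => s ≠ Step.d) = gword k := by
            simpa [List.filter_cons] using hf
          have hp' : ∀ i, t[i]? = some Step.h → ∃ j, i = j + 1 ∧ t[j]? = some Step.u := by
            intro i hi
            obtain ⟨j, hj, hju⟩ := hp (i + 1) (by simpa using hi)
            rw [show j = i by omega] at hju
            cases i with
            | zero => simp at hju
            | succ i' => exact ⟨i', rfl, by simpa using hju⟩
          have hrec := ih t k (by simpa using hlen) hf' hp'
          have e : (Step.d :: t).filter (fun s => s ≠ Step.h) =
              Step.d :: t.filter (fun s => s ≠ Step.h) := by simp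
          rw [e]
          show Step.d :: ins (t.filter (fun s => s ≠ Step.h)) = Step.d :: t
          rw [hrec]
      | Step.u :: t =>
          have hfu : Step.u :: t.filter (fun s => s ≠ Step.d) = gword k := by
            simpa [List.filter_cons] using hf
          match k, hfu with
          | 0, hfu => simp [gword] at hfu
          | 1, hfu =>
              have htf : t.filter (fun s => s ≠ Step.d) = [] := by
                rw [gword] at hfu
                simpa using hfu
              have htd : ∀ x ∈ t, x = Step.d := by
                intro x hx
                have := List.filter_eq_nil_iff.mp htf x hx
                simpa using this
              have hnou : Step.u ∉ t := fun hu => by simpa using htd _ hu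
              have h1 : t.filter (fun s => s ≠ Step.h) = t :=
                List.filter_eq_self.mpr (fun a ha => by simp [htd a ha])
              have e : (Step.u :: t).filter (fun s => s ≠ Step.h) =
                  Step.u :: t.filter (fun s => s ≠ Step.h) := by simp
              rw [e, h1]
              show (if Step.u ∈ t then Step.u :: Step.h :: ins t
                else Step.u :: ins t) = Step.u :: t
              rw [if_neg hnou, ins_no_u hnou]
          | (m + 2), hfu =>
              have hft : t.filter (fun s => s ≠ Step.d) = Step.h :: gword (m + 1) := by
                rw [gword] at hfu
                exact (List.cons_inj_right _).mp hfu
              have hpt : ∀ i, t[i]? = some Step.h →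
                  i = 0 ∨ ∃ j, i = j + 1 ∧ t[j]? = some Step.u := by
                intro i hi
                obtain ⟨j, hj, hju⟩ := hp (i + 1) (by simpa using hi)
                rw [show j = i by omega] at hju
                cases i with
                | zero => exact Or.inl rfl
                | succ i' => exact Or.inr ⟨i', rfl, by simpa using hju⟩
              obtain ⟨t', rfl⟩ := head_h_of t (gword (m + 1)) hft hpt
              have hft' : t'.filter (fun s => s ≠ Step.d) = gword (m + 1) := by
                simpa [List.filter_cons] using hft
              have hut' : Step.u ∈ t' := by
                have : Step.u ∈ t'.filter (fun s => s ≠ Step.d) := by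
                  rw [hft']; exact gword_mem_u m
                exact List.mem_of_mem_filter this
              have huf : Step.u ∈ t'.filter (fun s => s ≠ Step.h) :=
                List.mem_filter.mpr ⟨hut', by simp⟩
              have hpt' : ∀ i, t'[i]? = some Step.h →
                  ∃ j, i = j + 1 ∧ t'[j]? = some Step.u := by
                intro i hi
                obtain ⟨j, hj, hju⟩ := hp (i + 2) (by simpa using hi)
                rw [show j = i + 1 by omega] at hju
                cases i with
                | zero => simp at hju
                | succ i' => exact ⟨i', rfl, by simpa using hju⟩
              have hrec := ih t' (m + 1) (by simp at hlen ⊢; omega) hft' hpt'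
              have e : (Step.u :: Step.h :: t').filter (fun s => s ≠ Step.h) =
                  Step.u :: t'.filter (fun s => s ≠ Step.h) := by simp
              rw [e]
              show (if Step.u ∈ t'.filter (fun s => s ≠ Step.h) then
                  Step.u :: Step.h :: ins (t'.filter (fun s => s ≠ Step.h))
                else Step.u :: ins (t'.filter (fun s => s ≠ Step.h))) =
                  Step.u :: Step.h :: t'
              rw [if_pos huf, hrec]

lemma canon_filter_eq {n : ℕ} {w : List Step} (hn : 1 ≤ n) (hw : IsSMotzkin n w)
    (ha : Atomic w) : canon (w.filter (fun s => s ≠ Step.h)) = w := by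
  obtain ⟨⟨hN, hz⟩, hcu, hcd, hch, hfd⟩ := hw
  obtain ⟨m, rfl⟩ : ∃ m, n = m + 1 := ⟨n - 1, by omega⟩
  have hpred := pred_of_atomic hN hfd ha
  obtain ⟨t, rfl⟩ : ∃ t, w = Step.h :: t := by
    match w, hch, hfd, hN with
    | [], hch, _, _ => simp at hch
    | Step.d :: t, _, _, hN =>
        have := hN [Step.d] ⟨t, rfl⟩
        simp [hsum_cons, hsum_nil, stepVal] at this
    | Step.u :: t, _, hfd, _ => exact absurd (by simp) (head_not_u hfd)
    | Step.h :: t, _, _, _ => exact ⟨t, rfl⟩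
  have hft : t.filter (fun s => s ≠ Step.d) = gword (m + 1) := by
    rw [huWord_eq_gword] at hfd
    have e : (Step.h :: t).filter (fun s => s ≠ Step.d) =
        Step.h :: t.filter (fun s => s ≠ Step.d) := by simp
    rw [e] at hfd
    exact (List.cons_inj_right _).mp hfd
  have hpt : ∀ i, t[i]? = some Step.h → ∃ j, i = j + 1 ∧ t[j]? = some Step.u := by
    intro i hi
    have hju := hpred i (by simpa using hi)
    cases i with
    | zero => simp at hju
    | succ i' => exact ⟨i', rfl, by simpa using hju⟩
  have hrec := ins_reconstruct_aux t.length t (m + 1) le_rfl hft hpt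
  have e : (Step.h :: t).filter (fun s => s ≠ Step.h) = t.filter (fun s => s ≠ Step.h) := by
    simp
  rw [e, canon, hrec]


lemma length_eq_counts (w : List Step) :
    w.length = w.count Step.u + w.count Step.d + w.count Step.h := by
  induction w with
  | nil => rfl
  | cons a t ih => cases a <;> simp [List.count_cons, ih] <;> omega

def convD : Step → DyckStep
  | Step.u => DyckStep.U
  | _ => DyckStep.D

def convS : DyckStep → Step
  | DyckStep.U => Step.u
  | DyckStep.D => Step.d

lemma count_convD_U {l : List Step} :
    (l.map convD).count DyckStep.U = l.count Step.u := by
  induction l with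
  | nil => rfl
  | cons a t ih => cases a <;> simp [List.count_cons, convD, ih]

lemma count_convD_D {l : List Step} (hl : ∀ x ∈ l, x = Step.u ∨ x = Step.d) :
    (l.map convD).count DyckStep.D = l.count Step.d := by
  induction l with
  | nil => rfl
  | cons a t ih =>
      have ih' := ih (fun x hx => hl x (by simp [hx]))
      rcases hl a (by simp) with rfl | rfl <;> simp [List.count_cons, convD, ih']

lemma count_convS_u (l : List DyckStep) :
    (l.map convS).count Step.u = l.count DyckStep.U := by
  induction l with
  | nil => rfl
  | cons a t ih => cases a <;> simp [List.count_cons, convS, ih]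

lemma count_convS_d (l : List DyckStep) :
    (l.map convS).count Step.d = l.count DyckStep.D := by
  induction l with
  | nil => rfl
  | cons a t ih => cases a <;> simp [List.count_cons, convS, ih]

lemma convS_convD {l : List Step} (hl : ∀ x ∈ l, x = Step.u ∨ x = Step.d) :
    (l.map convD).map convS = l := by
  induction l with
  | nil => rfl
  | cons a t ih =>
      have ih' := ih (fun x hx => hl x (by simp [hx]))
      rcases hl a (by simp) with rfl | rfl <;> simp [convD, convS, ih']

lemma convD_convS (l : List DyckStep) : (l.map convS).map convD = l := by
  induction l with
  | nil => rfl
  | cons a t ih => cases a <;> simp [convD, convS, ih]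

lemma mem_convS (l : List DyckStep) : ∀ x ∈ l.map convS, x = Step.u ∨ x = Step.d := by
  intro x hx
  rw [List.mem_map] at hx
  obtain ⟨a, _, rfl⟩ := hx
  cases a
  · exact Or.inl rfl
  · exact Or.inr rfl

lemma dyckstep_length (l : List DyckStep) :
    l.length = l.count DyckStep.U + l.count DyckStep.D := by
  induction l with
  | nil => rfl
  | cons a t ih => cases a <;> simp [List.count_cons, ih] <;> omega

/-- Equivalence between our Dyck encoding and mathlib Dyck words. -/
def dyckEquiv (n : ℕ) : {D : List Step // IsDyck n D} ≃
    {p : DyckWord // p.semilength = n} where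
  toFun x :=
    ⟨⟨x.1.map convD, by
        rw [count_convD_U, count_convD_D x.2.1, x.2.2.1, x.2.2.2.1], by
        intro i
        obtain ⟨hud, hcu, hcd, hN⟩ := x.2
        rw [← List.map_take]
        have hall : ∀ y ∈ x.1.take i, y = Step.u ∨ y = Step.d :=
          fun y hy => hud y (List.take_subset i x.1 hy)
        rw [count_convD_U, count_convD_D hall]
        have h1 := hN _ (List.take_prefix i x.1)
        rw [hsum_ud hall] at h1
        omega⟩, by
      show (x.1.map convD).count DyckStep.U = n
      rw [count_convD_U, x.2.2.1]⟩
  invFun y :=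
    ⟨y.1.toList.map convS, by
      have hUD := y.1.count_U_eq_count_D
      have hsl : y.1.toList.count DyckStep.U = n := y.2
      refine ⟨mem_convS _, ?_, ?_, ?_⟩
      · rw [count_convS_u, hsl]
      · rw [count_convS_d, ← hUD, hsl]
      · intro q hq
        rw [List.prefix_iff_eq_take] at hq
        rw [hq, ← List.map_take]
        have hall := mem_convS (y.1.toList.take q.length)
        rw [hsum_ud hall, count_convS_u, count_convS_d]
        have := y.1.count_D_le_count_U q.length
        omega⟩
  left_inv x := Subtype.ext (convS_convD x.2.1)
  right_inv y := Subtype.ext (DyckWord.ext (convD_convS y.1.toList))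

/-- Equivalence between atomic S-Motzkin paths and our Dyck encoding. -/
def atomicEquiv (n : ℕ) (hn : 1 ≤ n) :
    {w : List Step // IsSMotzkin n w ∧ Atomic w} ≃ {D : List Step // IsDyck n D} where
  toFun x := ⟨x.1.filter (fun s => s ≠ Step.h), isDyck_filter x.2.1⟩
  invFun y := ⟨canon y.1, isSMotzkin_canon y.2 hn,
    atomic_canon y.2.1 (nonnegPrefixes_canon y.2.2.2.2)⟩
  left_inv x := Subtype.ext (canon_filter_eq hn x.2.1 x.2.2)
  right_inv y := Subtype.ext (filter_canon y.2.1)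

lemma isSMotzkin_zero_nil : IsSMotzkin 0 [] ∧ Atomic [] := by
  refine ⟨⟨⟨fun p hp => ?_, rfl⟩, rfl, rfl, rfl, rfl⟩, ?_⟩
  · rw [List.prefix_nil.mp hp]
    exact le_refl 0
  · rintro ⟨i, j, _, hi, _⟩
    simp at hi

lemma eq_nil_of_isSMotzkin_zero {w : List Step} (hw : IsSMotzkin 0 w) : w = [] := by
  obtain ⟨_, hcu, hcd, hch, _⟩ := hw
  have := length_eq_counts w
  rw [hcu, hcd, hch] at this
  exact List.length_eq_zero_iff.mp (by omega)

end ASAux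

/-- atomic S-Motzkin paths of length 3n are counted by the Catalan
number Cₙ = (1/(n+1))·C(2n,n). -/
theorem atomic_smotzkin_catalan (n : ℕ) :
    Nat.card {w : List Step // IsSMotzkin n w ∧ Atomic w} =
      Nat.choose (2 * n) n / (n + 1) := by
  have hcat : Nat.choose (2 * n) n / (n + 1) = catalan n := by
    rw [catalan_eq_centralBinom_div, Nat.centralBinom]
  rw [hcat]
  rcases Nat.eq_zero_or_pos n with rfl | hn
  · rw [catalan_zero]
    have e : {w : List Step // IsSMotzkin 0 w ∧ Atomic w} ≃ PUnit.{1} :=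
      { toFun := fun _ => PUnit.unit
        invFun := fun _ => ⟨[], ASAux.isSMotzkin_zero_nil⟩
        left_inv := fun x => Subtype.ext
          (ASAux.eq_nil_of_isSMotzkin_zero x.2.1).symm
        right_inv := fun _ => rfl }
    rw [Nat.card_congr e]
    exact Nat.card_unique
  · rw [Nat.card_congr (ASAux.atomicEquiv n hn), Nat.card_congr (ASAux.dyckEquiv n),
      Nat.card_eq_fintype_card, DyckWord.card_dyckWord_semilength_eq_catalan]
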